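/- arXiv:1904.04337 — 2 statements merged into one kernel-verified Lean document; each statement's English description precedes it below -/
import Mathlib

section
/- Let t be a prime and q₁ < q₂ < … < q_k distinct odd primes such that t is a primitive root modulo each q_j, gcd(q_i − 1, q_j − 1) = 2 for i ≠ j, and let r be an integer coprime to each q_j that is a quadratic non-residue modulo every q_j. Then there exists γ ∈ ℕ with t^γ ≡ r (mod q₁·q₂⋯q_k). -/
theorem discrete_log_crt (t k : ℕ) (ht : t.Prime) (hk : 1 ≤ k)
    (qs : ℕ → ℕ)
    (hprime : ∀ j ∈ Finset.Icc 1 k, (qs j).Prime)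
    (hodd : ∀ j ∈ Finset.Icc 1 k, Odd (qs j))
    (hmono : ∀ i ∈ Finset.Icc 1 k, ∀ j ∈ Finset.Icc 1 k, i < j → qs i < qs j)
    (hprimroot : ∀ j ∈ Finset.Icc 1 k, orderOf (t : ZMod (qs j)) = qs j - 1)
    (hgcd : ∀ i ∈ Finset.Icc 1 k, ∀ j ∈ Finset.Icc 1 k, i ≠ j →
      Nat.gcd (qs i - 1) (qs j - 1) = 2)
    (r : ℤ)
    (hcop : ∀ j ∈ Finset.Icc 1 k, Int.gcd r (qs j) = 1)
    (hnres : ∀ j ∈ Finset.Icc 1 k, ¬ IsSquare ((r : ZMod (qs j)))) :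
    ∃ γ : ℕ, (t : ℤ) ^ γ ≡ r [ZMOD (∏ j ∈ Finset.Icc 1 k, qs j)] := by
  classical
  -- basic facts about each q_j
  have hq3 : ∀ j ∈ Finset.Icc 1 k, 3 ≤ qs j := by
    intro j hj
    have hp := (hprime j hj).two_le
    have ho := Nat.odd_iff.mp (hodd j hj)
    omega
  have heven : ∀ j ∈ Finset.Icc 1 k, 2 ∣ qs j - 1 := by
    intro j hj
    have he : Even (qs j - 1) := Nat.Odd.sub_odd (hodd j hj) odd_one
    exact he.two_dvd
  -- m j : half of q_j - 1
  set m : ℕ → ℕ := fun j => (qs j - 1) / 2 with hm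
  have hm2 : ∀ j ∈ Finset.Icc 1 k, 2 * m j = qs j - 1 := by
    intro j hj
    exact Nat.mul_div_cancel' (heven j hj)
  have hm0 : ∀ j ∈ Finset.Icc 1 k, m j ≠ 0 := by
    intro j hj h0
    have h1 := hm2 j hj
    have h3 := hq3 j hj
    omega
  -- step 1 : for each j there is an odd exponent 2*d+1 with t^(2d+1) = r mod q_j
  have key : ∀ j ∈ Finset.Icc 1 k, ∃ d : ℕ,
      (t : ZMod (qs j)) ^ (2 * d + 1) = (r : ZMod (qs j)) := by
    intro j hj
    haveI : Fact (qs j).Prime := ⟨hprime j hj⟩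
    have hq1 : 1 < qs j := (hprime j hj).one_lt
    -- r is nonzero mod q_j
    have hr0 : (r : ZMod (qs j)) ≠ 0 := by
      intro h
      have hdvd : ((qs j : ℤ)) ∣ r := (ZMod.intCast_zmod_eq_zero_iff_dvd r (qs j)).mp h
      have : (qs j : ℤ).natAbs ∣ Int.gcd r (qs j) := Nat.dvd_gcd (Int.natAbs_dvd_natAbs.mpr hdvd) dvd_rfl
      rw [hcop j hj] at this
      simp only [Int.natAbs_natCast] at this
      exact absurd (Nat.dvd_one.mp this) (by omega)
    have ht0 : (t : ZMod (qs j)) ≠ 0 := by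
      intro h
      have h1 : (t : ZMod (qs j)) ^ orderOf (t : ZMod (qs j)) = 1 := pow_orderOf_eq_one _
      rw [hprimroot j hj, h] at h1
      rw [zero_pow (by omega : qs j - 1 ≠ 0)] at h1
      exact zero_ne_one h1
    -- units
    obtain ⟨τ, hτ⟩ := (isUnit_iff_ne_zero.mpr ht0)
    obtain ⟨u, hu⟩ := (isUnit_iff_ne_zero.mpr hr0)
    have hτord : orderOf τ = qs j - 1 := by
      rw [← orderOf_units, hτ, hprimroot j hj]
    -- τ generates the unit group
    have htop : Subgroup.zpowers τ = ⊤ := by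
      apply Subgroup.eq_top_of_card_eq
      rw [Nat.card_zpowers, hτord, Nat.card_eq_fintype_card, ZMod.card_units]
    have humem : u ∈ Subgroup.zpowers τ := htop ▸ Subgroup.mem_top u
    have : u ∈ Submonoid.powers τ := by
      have hfin : IsOfFinOrder τ := by
        rw [← orderOf_pos_iff, hτord]; omega
      exact hfin.mem_powers_iff_mem_zpowers.mpr humem
    obtain ⟨n, hn⟩ := this
    have hn' : τ ^ n = u := hn
    -- n is odd
    rcases Nat.even_or_odd n with he | hoddn
    · exfalso
      obtain ⟨c, hc⟩ := he
      apply hnres j hj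
      refine ⟨(τ ^ c : (ZMod (qs j))ˣ), ?_⟩
      have : ((τ ^ n : (ZMod (qs j))ˣ) : ZMod (qs j)) = (r : ZMod (qs j)) := by
        rw [hn', hu]
      rw [← this, hc]
      push_cast
      ring
    · obtain ⟨d, hd⟩ := hoddn
      refine ⟨d, ?_⟩
      have : ((τ ^ n : (ZMod (qs j))ˣ) : ZMod (qs j)) = (r : ZMod (qs j)) := by
        rw [hn', hu]
      rw [← this, hd]
      push_cast [hτ]
      ring
  choose! d hd using key
  -- step 2: the m j are pairwise coprime
  have hpp : Set.Pairwise (Finset.Icc 1 k : Set ℕ) (Function.onFun Nat.Coprime m) := by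
    intro i hi j hj hij
    simp only [Finset.coe_Icc, Set.mem_Icc] at hi hj
    have hi' : i ∈ Finset.Icc 1 k := Finset.mem_Icc.mpr hi
    have hj' : j ∈ Finset.Icc 1 k := Finset.mem_Icc.mpr hj
    have h2 : Nat.gcd (qs i - 1) (qs j - 1) = 2 := hgcd i hi' j hj' hij
    rw [← hm2 i hi', ← hm2 j hj', Nat.gcd_mul_left] at h2
    have : Nat.gcd (m i) (m j) = 1 := by omega
    exact this
  -- step 3: CRT
  obtain ⟨δ, hδ⟩ := Nat.chineseRemainderOfFinset d m (Finset.Icc 1 k)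
    (fun j hj => hm0 j hj) hpp
  refine ⟨2 * δ + 1, ?_⟩
  -- congruence modulo each q_j
  have hper : ∀ j ∈ Finset.Icc 1 k, (qs j : ℤ) ∣ r - (t : ℤ) ^ (2 * δ + 1) := by
    intro j hj
    have hmod : (2 * δ + 1) % (qs j - 1) = (2 * d j + 1) % (qs j - 1) := by
      have h1 : δ ≡ d j [MOD m j] := hδ j hj
      have h2 : 2 * δ + 1 ≡ 2 * d j + 1 [MOD 2 * m j] := (Nat.ModEq.mul_left' 2 h1).add_right 1
      rw [hm2 j hj] at h2
      exact h2
    have heq : (t : ZMod (qs j)) ^ (2 * δ + 1) = (r : ZMod (qs j)) := by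
      have := hprimroot j hj
      calc (t : ZMod (qs j)) ^ (2 * δ + 1)
          = (t : ZMod (qs j)) ^ ((2 * δ + 1) % orderOf (t : ZMod (qs j))) :=
            (pow_mod_orderOf _ _).symm
        _ = (t : ZMod (qs j)) ^ ((2 * d j + 1) % orderOf (t : ZMod (qs j))) := by
            rw [this, hmod]
        _ = (t : ZMod (qs j)) ^ (2 * d j + 1) := pow_mod_orderOf _ _
        _ = (r : ZMod (qs j)) := hd j hj
    have : (((t : ℤ) ^ (2 * δ + 1) : ℤ) : ZMod (qs j)) = ((r : ℤ) : ZMod (qs j)) := by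
      push_cast
      exact_mod_cast heq
    have hZ : (t : ℤ) ^ (2 * δ + 1) ≡ r [ZMOD (qs j)] :=
      (ZMod.intCast_eq_intCast_iff' _ _ _).mp (by exact_mod_cast this)
    exact Int.ModEq.dvd hZ
  -- combine via coprimality of the q_j
  have hdistinct : ∀ i ∈ Finset.Icc 1 k, ∀ j ∈ Finset.Icc 1 k, i ≠ j → qs i ≠ qs j := by
    intro i hi j hj hij
    rcases lt_or_gt_of_ne hij with h | h
    · exact Nat.ne_of_lt (hmono i hi j hj h)
    · exact (Nat.ne_of_lt (hmono j hj i hi h)).symm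
  have hprod : (∏ j ∈ Finset.Icc 1 k, (qs j : ℤ)) ∣ r - (t : ℤ) ^ (2 * δ + 1) := by
    apply Finset.prod_dvd_of_coprime
    · intro i hi j hj hij
      simp only [Finset.mem_coe] at hi hj
      have : Nat.Coprime (qs i) (qs j) :=
        (Nat.coprime_primes (hprime i hi) (hprime j hj)).mpr (hdistinct i hi j hj hij)
      exact Nat.isCoprime_iff_coprime.mpr this
    · intro i hi
      exact hper i hi
  exact Int.modEq_iff_dvd.mpr hprod
end

section
/- Let q ≥ 2 and let f : ℕ → ℂ be a completely multiplicative q-automatic function such that infinitely many primes p satisfy f(p) = 0. Then f(p) = 0 for all sufficiently large primes p. -/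
open scoped Classical

def CompletelyMultiplicative (f : ℕ → ℂ) : Prop :=
  f 1 = 1 ∧ ∀ m n : ℕ, f (m * n) = f m * f n

def qKernel (q : ℕ) (f : ℕ → ℂ) : Set (ℕ → ℂ) :=
  {g | ∃ i, 1 ≤ i ∧ ∃ r, r < q ^ i ∧ g = fun n => f (q ^ i * n + r)}


noncomputable def st (q : ℕ) (t : ℕ → ℂ) (j r : ℕ) : ℕ → ℂ := fun x => t (q ^ j * x + r)

lemma modsplit (A B n : ℕ) (hA : 0 < A) (hB : 0 < B) :
    n % (A * B) = n % A + A * ((n / A) % B) := by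
  have e1 : A * (n / A) + n % A = n := Nat.div_add_mod n A
  have e2 : B * (n / A / B) + (n / A) % B = n / A := Nat.div_add_mod (n / A) B
  have e3 : n / A / B = n / (A * B) := Nat.div_div_eq_div_mul n A B
  have key : n = A * B * (n / (A * B)) + (n % A + A * ((n / A) % B)) := by
    calc n = A * (n / A) + n % A := e1.symm
    _ = A * (B * (n / A / B) + (n / A) % B) + n % A := by rw [e2]
    _ = A * B * (n / A / B) + (n % A + A * ((n / A) % B)) := by ring
    _ = A * B * (n / (A * B)) + (n % A + A * ((n / A) % B)) := by rw [e3]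
  have hlt : n % A + A * ((n / A) % B) < A * B := by
    have h1 : n % A < A := Nat.mod_lt _ hA
    have h2 : (n / A) % B < B := Nat.mod_lt _ hB
    have h3 : A * ((n / A) % B) ≤ A * (B - 1) := Nat.mul_le_mul_left A (by omega)
    have h4 : A * (B - 1) + A = A * B := by
      obtain ⟨b, rfl⟩ : ∃ b, B = b + 1 := ⟨B - 1, by omega⟩
      simp [Nat.mul_succ]
    omega
  nth_rewrite 1 [key]
  rw [Nat.mul_add_mod]
  exact Nat.mod_eq_of_lt hlt

lemma st_zero (q : ℕ) (t : ℕ → ℂ) : st q t 0 0 = t := by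
  funext x; simp [st]

lemma st_split (q : ℕ) (hq : 0 < q) (t : ℕ → ℂ) (A B n : ℕ) :
    st q t (A + B) (n % q ^ (A + B)) = st q (st q t A (n % q ^ A)) B ((n / q ^ A) % q ^ B) := by
  funext x
  simp only [st]
  congr 1
  rw [pow_add, modsplit (q ^ A) (q ^ B) n (pow_pos hq A) (pow_pos hq B)]
  ring

-- reconstruction
lemma recon (q : ℕ) (L n : ℕ) :
    n = n % q ^ L + q ^ L * ((n / q ^ L) % q) + q ^ (L + 1) * (n / q ^ (L + 1)) := by
  have e1 : q ^ L * (n / q ^ L) + n % q ^ L = n := Nat.div_add_mod n (q ^ L)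
  have e2 : q * (n / q ^ L / q) + (n / q ^ L) % q = n / q ^ L := Nat.div_add_mod (n / q ^ L) q
  have e3 : n / q ^ L / q = n / q ^ (L + 1) := by
    rw [Nat.div_div_eq_div_mul, pow_succ]
  calc n = q ^ L * (n / q ^ L) + n % q ^ L := e1.symm
  _ = q ^ L * (q * (n / q ^ L / q) + (n / q ^ L) % q) + n % q ^ L := by rw [e2]
  _ = q ^ L * (q * (n / q ^ (L + 1)) + (n / q ^ L) % q) + n % q ^ L := by rw [e3]
  _ = n % q ^ L + q ^ L * ((n / q ^ L) % q) + q ^ (L + 1) * (n / q ^ (L + 1)) := by ring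

lemma count_bound (q : ℕ) (hq : 2 ≤ q) :
    ∀ (c : ℕ) (V : Finset (ℕ → ℂ)), V.card = c →
    (∀ s ∈ V, ∀ L M₁ M₂ : ℕ, M₁ < q ^ L → M₂ < q ^ L →
      (∀ x, s (q ^ L * x + M₁) = s x) → (∀ x, s (q ^ L * x + M₂) = s x) → M₁ = M₂) →
    ∀ (ℓ : ℕ) (t : ℕ → ℂ),
      ((Finset.range (q ^ ℓ)).filter (fun n => ∀ j ≤ ℓ, st q t j (n % q ^ j) ∈ V)).card
        ≤ (2 * q * (ℓ + 1)) ^ c := by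
  have hq0 : 0 < q := by omega
  intro c
  induction c with
  | zero =>
    intro V hVc _ ℓ t
    have hV : V = ∅ := Finset.card_eq_zero.mp hVc
    have hW : ((Finset.range (q ^ ℓ)).filter (fun n => ∀ j ≤ ℓ, st q t j (n % q ^ j) ∈ V)) = ∅ := by
      apply Finset.filter_false_of_mem
      intro n _ hcond
      have h0 := hcond 0 (Nat.zero_le ℓ)
      rw [hV] at h0
      exact absurd h0 (Finset.notMem_empty _)
    rw [hW]
    simp
  | succ c ih =>
    intro V hVc UL ℓ t
    set W := ((Finset.range (q ^ ℓ)).filter (fun n => ∀ j ≤ ℓ, st q t j (n % q ^ j) ∈ V)) with hWdef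
    by_cases htV : t ∈ V
    swap
    · have hW : W = ∅ := by
        apply Finset.filter_false_of_mem
        intro n _ hcond
        have h0 := hcond 0 (Nat.zero_le ℓ)
        have h1 : st q t 0 (n % q ^ 0) = t := by
          rw [pow_zero, Nat.mod_one, st_zero]
        rw [h1] at h0
        exact htV h0
      rw [hW]
      simp
    · have hP0 : ∀ n : ℕ, st q t 0 (n % q ^ 0) = t := by
        intro n; rw [pow_zero, Nat.mod_one, st_zero]
      set Lg : ℕ → ℕ := fun n =>
        @Nat.findGreatest (fun j => st q t j (n % q ^ j) = t) (Classical.decPred _) ℓ with hLgdef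
      have hLg_le : ∀ n, Lg n ≤ ℓ := by
        intro n
        exact Nat.findGreatest_le (P := fun j => st q t j (n % q ^ j) = t) ℓ
      have hLg_spec : ∀ n, st q t (Lg n) (n % q ^ (Lg n)) = t := by
        intro n
        exact Nat.findGreatest_spec (P := fun j => st q t j (n % q ^ j) = t)
          (Nat.zero_le ℓ) (hP0 n)
      have hLg_max : ∀ n j, Lg n < j → j ≤ ℓ → st q t j (n % q ^ j) ≠ t := by
        intro n j h1 h2
        exact Nat.findGreatest_is_greatest (P := fun j => st q t j (n % q ^ j) = t) h1 h2
      set W₁ := W.filter (fun n => st q t ℓ (n % q ^ ℓ) = t) with hW1def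
      set W₂ := W.filter (fun n => ¬ st q t ℓ (n % q ^ ℓ) = t) with hW2def
      have hWsplit : W₁ ∪ W₂ = W := Finset.filter_union_filter_not_eq _ W
      have hW1card : W₁.card ≤ 1 := by
        apply Finset.card_le_one.mpr
        intro a ha b hb
        have haW : a ∈ W := (Finset.mem_filter.mp ha).1
        have hbW : b ∈ W := (Finset.mem_filter.mp hb).1
        have haR : a < q ^ ℓ := Finset.mem_range.mp (Finset.mem_filter.mp haW).1
        have hbR : b < q ^ ℓ := Finset.mem_range.mp (Finset.mem_filter.mp hbW).1
        have hla : st q t ℓ (a % q ^ ℓ) = t := (Finset.mem_filter.mp ha).2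
        have hlb : st q t ℓ (b % q ^ ℓ) = t := (Finset.mem_filter.mp hb).2
        have key : a % q ^ ℓ = b % q ^ ℓ := by
          apply UL t htV ℓ _ _ (Nat.mod_lt _ (pow_pos hq0 ℓ)) (Nat.mod_lt _ (pow_pos hq0 ℓ))
          · intro x; exact congrFun hla x
          · intro x; exact congrFun hlb x
        rwa [Nat.mod_eq_of_lt haR, Nat.mod_eq_of_lt hbR] at key
      set Tgt := (Finset.range ℓ ×ˢ Finset.range q).sigma
          (fun La => (Finset.range (q ^ (ℓ - La.1 - 1))).filter
            (fun m => ∀ j ≤ ℓ - La.1 - 1, st q (st q t 1 La.2) j (m % q ^ j) ∈ V.erase t)) with hTgtdef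
      have hW2card : W₂.card ≤ Tgt.card := by
        apply Finset.card_le_card_of_injOn
          (fun n => (⟨(Lg n, (n / q ^ (Lg n)) % q), n / q ^ (Lg n + 1)⟩ : (_ : ℕ × ℕ) × ℕ))
        · intro n hn
          have hnW : n ∈ W := (Finset.mem_filter.mp hn).1
          have hnL : ¬ st q t ℓ (n % q ^ ℓ) = t := (Finset.mem_filter.mp hn).2
          have hnR : n < q ^ ℓ := Finset.mem_range.mp (Finset.mem_filter.mp hnW).1
          have hncond : ∀ j ≤ ℓ, st q t j (n % q ^ j) ∈ V := (Finset.mem_filter.mp hnW).2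
          have hLlt : Lg n < ℓ := by
            rcases Nat.lt_or_ge (Lg n) ℓ with h | h
            · exact h
            · exfalso
              have heq : Lg n = ℓ := le_antisymm (hLg_le n) h
              exact hnL (heq ▸ hLg_spec n)
          have hexp : (ℓ - Lg n - 1) + (Lg n + 1) = ℓ := by omega
          have hmlt : n / q ^ (Lg n + 1) < q ^ (ℓ - Lg n - 1) := by
            rw [Nat.div_lt_iff_lt_mul (pow_pos hq0 _)]
            calc n < q ^ ℓ := hnR
            _ = q ^ (ℓ - Lg n - 1) * q ^ (Lg n + 1) := by rw [← pow_add, hexp]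
          rw [hTgtdef]
          simp only [Finset.mem_coe, Finset.mem_sigma, Finset.mem_product, Finset.mem_range, Finset.mem_filter]
          refine ⟨⟨hLlt, Nat.mod_lt _ hq0⟩, hmlt, ?_⟩
          intro j hj
          have e1 := st_split q hq0 t (Lg n) (1 + j) n
          have e2 := st_split q hq0 t 1 j (n / q ^ (Lg n))
          have ediv : n / q ^ (Lg n) / q ^ 1 = n / q ^ (Lg n + 1) := by
            rw [pow_one, Nat.div_div_eq_div_mul, ← pow_succ]
          have echain : st q (st q t 1 ((n / q ^ (Lg n)) % q)) j
              ((n / q ^ (Lg n + 1)) % q ^ j)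
              = st q t (Lg n + (1 + j)) (n % q ^ (Lg n + (1 + j))) := by
            rw [e1, hLg_spec n, e2, ediv, pow_one]
          rw [echain]
          have hjle : Lg n + (1 + j) ≤ ℓ := by omega
          apply Finset.mem_erase.mpr
          exact ⟨hLg_max n _ (by omega) hjle, hncond _ hjle⟩
        · intro n hn n' hn' heq
          have hnW : n ∈ W := (Finset.mem_filter.mp hn).1
          have hn'W : n' ∈ W := (Finset.mem_filter.mp hn').1
          have hnR : n < q ^ ℓ := Finset.mem_range.mp (Finset.mem_filter.mp hnW).1
          have hn'R : n' < q ^ ℓ := Finset.mem_range.mp (Finset.mem_filter.mp hn'W).1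
          obtain ⟨h1, h2⟩ := Sigma.mk.inj_iff.mp heq
          have hL : Lg n = Lg n' := congrArg Prod.fst h1
          have ha : (n / q ^ (Lg n)) % q = (n' / q ^ (Lg n')) % q := congrArg Prod.snd h1
          have hm : n / q ^ (Lg n + 1) = n' / q ^ (Lg n' + 1) := eq_of_heq h2
          have hr : n % q ^ (Lg n) = n' % q ^ (Lg n) := by
            apply UL t htV (Lg n) _ _ (Nat.mod_lt _ (pow_pos hq0 _)) (Nat.mod_lt _ (pow_pos hq0 _))
            · intro x; exact congrFun (hLg_spec n) x
            · intro x
              have h3 := hLg_spec n'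
              rw [← hL] at h3
              exact congrFun h3 x
          calc n = n % q ^ (Lg n) + q ^ (Lg n) * ((n / q ^ (Lg n)) % q)
              + q ^ (Lg n + 1) * (n / q ^ (Lg n + 1)) := recon q (Lg n) n
          _ = n' % q ^ (Lg n') + q ^ (Lg n') * ((n' / q ^ (Lg n')) % q)
              + q ^ (Lg n' + 1) * (n' / q ^ (Lg n' + 1)) := by
              rw [hr, ha, hm, hL]
          _ = n' := (recon q (Lg n') n').symm
      have hTgtcard : Tgt.card ≤ ℓ * q * (2 * q * (ℓ + 1)) ^ c := by
        have hcard : (V.erase t).card = c := by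
          rw [Finset.card_erase_of_mem htV, hVc]
          omega
        have UL' : ∀ s ∈ V.erase t, ∀ L M₁ M₂ : ℕ, M₁ < q ^ L → M₂ < q ^ L →
            (∀ x, s (q ^ L * x + M₁) = s x) → (∀ x, s (q ^ L * x + M₂) = s x) → M₁ = M₂ := by
          intro s hs
          exact UL s (Finset.mem_of_mem_erase hs)
        calc Tgt.card
            = ∑ La ∈ Finset.range ℓ ×ˢ Finset.range q,
              ((Finset.range (q ^ (ℓ - La.1 - 1))).filter
                (fun m => ∀ j ≤ ℓ - La.1 - 1, st q (st q t 1 La.2) j (m % q ^ j) ∈ V.erase t)).card := by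
              rw [hTgtdef, Finset.card_sigma]
        _ ≤ ∑ La ∈ Finset.range ℓ ×ˢ Finset.range q, (2 * q * (ℓ + 1)) ^ c := by
              apply Finset.sum_le_sum
              intro La _
              calc ((Finset.range (q ^ (ℓ - La.1 - 1))).filter
                  (fun m => ∀ j ≤ ℓ - La.1 - 1, st q (st q t 1 La.2) j (m % q ^ j) ∈ V.erase t)).card
                  ≤ (2 * q * ((ℓ - La.1 - 1) + 1)) ^ c := ih (V.erase t) hcard UL' _ _
              _ ≤ (2 * q * (ℓ + 1)) ^ c := by
                  apply Nat.pow_le_pow_left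
                  have hle : ℓ - La.1 - 1 ≤ ℓ := by omega
                  nlinarith
        _ = ℓ * q * (2 * q * (ℓ + 1)) ^ c := by
              rw [Finset.sum_const, Finset.card_product, Finset.card_range, Finset.card_range,
                smul_eq_mul]
      have hX : 1 ≤ (2 * q * (ℓ + 1)) ^ c := Nat.one_le_pow _ _ (by positivity)
      calc W.card = (W₁ ∪ W₂).card := by rw [hWsplit]
      _ ≤ W₁.card + W₂.card := Finset.card_union_le _ _
      _ ≤ 1 + (ℓ * q * (2 * q * (ℓ + 1)) ^ c) := by
          have h5 := hW2card.trans hTgtcard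
          omega
      _ ≤ (2 * q * (ℓ + 1)) ^ (c + 1) := by
          rw [pow_succ]
          nlinarith [hX, hq]

lemma goodpair_contradiction (q : ℕ) (hq : 2 ≤ q) (f : ℕ → ℂ)
    (hf : CompletelyMultiplicative f)
    (hinf : {p : ℕ | p.Prime ∧ f p = 0}.Infinite)
    (c u L M₁ M₂ v₀ : ℕ) (hM : M₁ < M₂) (hM2 : M₂ < q ^ L)
    (loop1 : ∀ x, f (q ^ (c + L) * x + (q ^ c * M₁ + u)) = f (q ^ c * x + u))
    (loop2 : ∀ x, f (q ^ (c + L) * x + (q ^ c * M₂ + u)) = f (q ^ c * x + u))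
    (hlive : f (q ^ c * v₀ + u) ≠ 0) : False := by
  have hq0 : 0 < q := by omega
  set h : ℕ → ℂ := fun x => f (q ^ c * x + u) with hh
  have hl1 : ∀ x, h (q ^ L * x + M₁) = h x := by
    intro x
    have e : q ^ c * (q ^ L * x + M₁) + u = q ^ (c + L) * x + (q ^ c * M₁ + u) := by
      rw [pow_add]; ring
    simp only [hh, e, loop1]
  have hl2 : ∀ x, h (q ^ L * x + M₂) = h x := by
    intro x
    have e : q ^ c * (q ^ L * x + M₂) + u = q ^ (c + L) * x + (q ^ c * M₂ + u) := by
      rw [pow_add]; ring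
    simp only [hh, e, loop2]
  have hL1 : 1 ≤ L := by
    by_contra hL
    have hL0 : L = 0 := by omega
    rw [hL0, pow_zero] at hM2
    omega
  obtain ⟨p, hpmem, hpnot⟩ := hinf.exists_notMem_finset (Finset.range (q ^ (c + L) + u + 1))
  obtain ⟨hp, hfp⟩ := hpmem
  have hpbig : q ^ (c + L) + u < p := by
    by_contra hcon
    exact hpnot (Finset.mem_range.mpr (by omega))
  haveI : Fact p.Prime := ⟨hp⟩
  have hqle : q ≤ q ^ (c + L) := by
    calc q = q ^ 1 := (pow_one q).symm
    _ ≤ q ^ (c + L) := Nat.pow_le_pow_right hq0 (by omega)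
  have hq' : (q : ZMod p) ≠ 0 := by
    rw [Ne, ZMod.natCast_eq_zero_iff]
    intro hdvd
    have := Nat.le_of_dvd (by omega) hdvd
    omega
  set Δ : ℕ := M₂ - M₁ with hΔ
  have hΔpos : 0 < Δ := by omega
  have hΔltp : Δ < p := by
    have h1 : Δ ≤ M₂ := by omega
    have h2 : q ^ L ≤ q ^ (c + L) := Nat.pow_le_pow_right hq0 (by omega)
    omega
  have hΔ' : ((Δ : ℕ) : ZMod p) ≠ 0 := by
    rw [Ne, ZMod.natCast_eq_zero_iff]
    intro hdvd
    have := Nat.le_of_dvd hΔpos hdvd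
    omega
  have hQ : ((q : ZMod p) ^ L) ≠ 0 := pow_ne_zero _ hq'
  have hQu : IsUnit ((q : ZMod p) ^ L) := isUnit_iff_ne_zero.mpr hQ
  set o : ℕ := orderOf hQu.unit with ho
  have hopos : 0 < o := orderOf_pos hQu.unit
  have hQo : ((q : ZMod p) ^ L) ^ o = 1 := by
    have h1 : hQu.unit ^ o = 1 := pow_orderOf_eq_one hQu.unit
    have h2 : ((hQu.unit ^ o : (ZMod p)ˣ) : ZMod p) = ((1 : (ZMod p)ˣ) : ZMod p) := by rw [h1]
    rwa [Units.val_pow_eq_pow_val, Units.val_one, hQu.unit_spec] at h2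
  have hden : (q : ZMod p) ^ c * ((Δ : ℕ) : ZMod p) ≠ 0 := mul_ne_zero (pow_ne_zero _ hq') hΔ'
  set τ : ZMod p := -((q : ZMod p) ^ c * (v₀ : ZMod p) + (u : ZMod p))
    * ((q : ZMod p) ^ c * ((Δ : ℕ) : ZMod p))⁻¹ with hτ
  have hDτ : ((q : ZMod p) ^ c * ((Δ : ℕ) : ZMod p)) * τ
      = -((q : ZMod p) ^ c * (v₀ : ZMod p) + (u : ZMod p)) := by
    rw [hτ, mul_comm, mul_assoc, inv_mul_cancel₀ hden, mul_one]
  set tt : ℕ := τ.val with htt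
  have httlt : tt < p := ZMod.val_lt τ
  have htc : ((tt : ℕ) : ZMod p) = τ := by
    rw [htt, ZMod.natCast_val, ZMod.cast_id]
  set T : ℕ := o * p with hT
  set μ : ℕ → ℕ := fun i => if o ∣ (T - 1 - i) ∧ (T - 1 - i) < tt * o then M₂ else M₁ with hμ
  set x : ℕ → ℕ := fun j => Nat.rec v₀ (fun i xi => q ^ L * xi + μ i) j with hxdef
  have hx0 : x 0 = v₀ := rfl
  have hxs : ∀ j, x (j + 1) = q ^ L * x j + μ j := fun j => rfl
  have hinv : ∀ j, h (x j) = h v₀ := by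
    intro j
    induction j with
    | zero => rw [hx0]
    | succ j IH =>
      rw [hxs j]
      by_cases hcnd : o ∣ (T - 1 - j) ∧ (T - 1 - j) < tt * o
      · have e : μ j = M₂ := by rw [hμ]; simp [hcnd]
        rw [e, hl2, IH]
      · have e : μ j = M₁ := by rw [hμ]; simp [hcnd]
        rw [e, hl1, IH]
  -- cast formula
  have hcast : ∀ j, ((x j : ℕ) : ZMod p)
      = ((q : ZMod p) ^ L) ^ j * (v₀ : ZMod p)
        + ∑ i ∈ Finset.range j, ((μ i : ℕ) : ZMod p) * ((q : ZMod p) ^ L) ^ (j - 1 - i) := by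
    intro j
    induction j with
    | zero => rw [hx0]; simp
    | succ j IH =>
      have e1 : ((x (j + 1) : ℕ) : ZMod p)
          = (q : ZMod p) ^ L * ((x j : ℕ) : ZMod p) + ((μ j : ℕ) : ZMod p) := by
        rw [hxs j]; push_cast; ring
      rw [e1, IH, Finset.sum_range_succ]
      have e2 : j + 1 - 1 - j = 0 := by omega
      have e3 : ∀ i ∈ Finset.range j,
          ((μ i : ℕ) : ZMod p) * ((q : ZMod p) ^ L) ^ (j + 1 - 1 - i)
          = (q : ZMod p) ^ L * (((μ i : ℕ) : ZMod p) * ((q : ZMod p) ^ L) ^ (j - 1 - i)) := by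
        intro i hi
        have hi' : i < j := Finset.mem_range.mp hi
        have e4 : j + 1 - 1 - i = (j - 1 - i) + 1 := by omega
        rw [e4, pow_succ]
        ring
      rw [Finset.sum_congr rfl e3, ← Finset.mul_sum, e2, pow_zero, mul_one, pow_succ]
      ring
  -- geometric sum of full period blocks vanishes
  have hgeo : ∀ k : ℕ, (∑ s ∈ Finset.range (o * k), ((q : ZMod p) ^ L) ^ s)
      = (k : ZMod p) * ∑ s ∈ Finset.range o, ((q : ZMod p) ^ L) ^ s := by
    intro k
    induction k with
    | zero => simp
    | succ k IH =>
      rw [Nat.mul_succ, Finset.sum_range_add, IH]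
      have e5 : ∀ i ∈ Finset.range o,
          ((q : ZMod p) ^ L) ^ (o * k + i) = ((q : ZMod p) ^ L) ^ i := by
        intro i _
        rw [pow_add, pow_mul, hQo, one_pow, one_mul]
      rw [Finset.sum_congr rfl e5]
      push_cast
      ring
  have hsumQ : (∑ s ∈ Finset.range T, ((q : ZMod p) ^ L) ^ s) = 0 := by
    rw [hT, hgeo p, ZMod.natCast_self, zero_mul]
  -- the conditional sum equals tt
  have hcondsum : (∑ s ∈ Finset.range T,
      (if o ∣ s ∧ s < tt * o then ((Δ : ℕ) : ZMod p) else 0) * ((q : ZMod p) ^ L) ^ s)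
      = ((Δ : ℕ) : ZMod p) * ((tt : ℕ) : ZMod p) := by
    have e6 : ∀ s ∈ Finset.range T,
        (if o ∣ s ∧ s < tt * o then ((Δ : ℕ) : ZMod p) else 0) * ((q : ZMod p) ^ L) ^ s
        = if o ∣ s ∧ s < tt * o then ((Δ : ℕ) : ZMod p) * ((q : ZMod p) ^ L) ^ s else 0 := by
      intro s _
      split <;> simp
    rw [Finset.sum_congr rfl e6, ← Finset.sum_filter]
    have himg : (Finset.range T).filter (fun s => o ∣ s ∧ s < tt * o)
        = (Finset.range tt).image (fun i => i * o) := by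
      ext s
      simp only [Finset.mem_filter, Finset.mem_range, Finset.mem_image]
      constructor
      · rintro ⟨hsT, ⟨i, rfl⟩, hlt⟩
        refine ⟨i, ?_, mul_comm i o⟩
        have : i * o < tt * o := by rw [mul_comm o i] at hlt; exact hlt
        exact Nat.lt_of_mul_lt_mul_right this
      · rintro ⟨i, hit, rfl⟩
        refine ⟨?_, ⟨i, mul_comm i o⟩, ?_⟩
        · have h7 : i * o < p * o := Nat.mul_lt_mul_of_lt_of_le (by omega) (le_refl o) hopos
          calc i * o < p * o := h7
          _ = o * p := Nat.mul_comm p o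
        · exact Nat.mul_lt_mul_of_lt_of_le hit (le_refl o) hopos
    rw [himg, Finset.sum_image (by intro a _ b _ hab; exact Nat.eq_of_mul_eq_mul_right hopos hab)]
    have e8 : ∀ i ∈ Finset.range tt,
        ((Δ : ℕ) : ZMod p) * ((q : ZMod p) ^ L) ^ (i * o) = ((Δ : ℕ) : ZMod p) := by
      intro i _
      rw [mul_comm i o, pow_mul, hQo, one_pow, mul_one]
    rw [Finset.sum_congr rfl e8, Finset.sum_const, Finset.card_range, nsmul_eq_mul]
    ring
  -- value of x T mod p
  have hμc : ∀ i, ((μ i : ℕ) : ZMod p)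
      = (M₁ : ZMod p) + (if o ∣ (T - 1 - i) ∧ (T - 1 - i) < tt * o then ((Δ : ℕ) : ZMod p) else 0) := by
    intro i
    by_cases hcnd : o ∣ (T - 1 - i) ∧ (T - 1 - i) < tt * o
    · have e : μ i = M₂ := by rw [hμ]; simp [hcnd]
      rw [e, if_pos hcnd]
      have e9 : M₂ = M₁ + Δ := by omega
      rw [e9]; push_cast; ring
    · have e : μ i = M₁ := by rw [hμ]; simp [hcnd]
      rw [e, if_neg hcnd, add_zero]
  have hxT : ((x T : ℕ) : ZMod p) = (v₀ : ZMod p) + ((Δ : ℕ) : ZMod p) * τ := by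
    rw [hcast T]
    have hQT : ((q : ZMod p) ^ L) ^ T = 1 := by
      rw [hT, pow_mul, hQo, one_pow]
    rw [hQT, one_mul]
    have e10 : ∀ i ∈ Finset.range T,
        ((μ i : ℕ) : ZMod p) * ((q : ZMod p) ^ L) ^ (T - 1 - i)
        = ((M₁ : ZMod p) * ((q : ZMod p) ^ L) ^ (T - 1 - i)
          + (if o ∣ (T - 1 - i) ∧ (T - 1 - i) < tt * o then ((Δ : ℕ) : ZMod p) else 0)
            * ((q : ZMod p) ^ L) ^ (T - 1 - i)) := by
      intro i _
      rw [hμc i, add_mul]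
    rw [Finset.sum_congr rfl e10, Finset.sum_add_distrib]
    rw [Finset.sum_range_reflect (fun s => (M₁ : ZMod p) * ((q : ZMod p) ^ L) ^ s) T]
    rw [Finset.sum_range_reflect
      (fun s => (if o ∣ s ∧ s < tt * o then ((Δ : ℕ) : ZMod p) else 0) * ((q : ZMod p) ^ L) ^ s) T]
    rw [← Finset.mul_sum, hsumQ, mul_zero, hcondsum, htc]
    ring
  -- final contradiction
  have hN : ((q ^ c * x T + u : ℕ) : ZMod p) = 0 := by
    push_cast
    rw [hxT]
    have e11 : (q : ZMod p) ^ c * ((v₀ : ZMod p) + ((Δ : ℕ) : ZMod p) * τ) + (u : ZMod p)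
        = ((q : ZMod p) ^ c * (v₀ : ZMod p) + (u : ZMod p))
          + ((q : ZMod p) ^ c * ((Δ : ℕ) : ZMod p)) * τ := by ring
    rw [e11, hDτ]
    ring
  have hdvd : p ∣ q ^ c * x T + u := (ZMod.natCast_eq_zero_iff _ p).mp hN
  obtain ⟨w, hw⟩ := hdvd
  have hzero : f (q ^ c * x T + u) = 0 := by
    rw [hw, hf.2 p w, hfp, zero_mul]
  have hval : f (q ^ c * x T + u) = h v₀ := hinv T
  rw [hval] at hzero
  exact hlive hzero

lemma fpow (f : ℕ → ℂ) (hf : CompletelyMultiplicative f) (a : ℕ) : ∀ e : ℕ, f (a ^ e) = f a ^ e := by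
  intro e
  induction e with
  | zero => simpa using hf.1
  | succ e IH => rw [pow_succ, hf.2, IH, pow_succ]

lemma fprod (f : ℕ → ℂ) (hf : CompletelyMultiplicative f) {ι : Type*} (s : Finset ι) (g : ι → ℕ) :
    f (∏ i ∈ s, g i) = ∏ i ∈ s, f (g i) := by
  induction s using Finset.induction_on with
  | empty => simpa using hf.1
  | insert _ _ hx IH => rw [Finset.prod_insert hx, Finset.prod_insert hx, hf.2, IH]

theorem infinitely_many_zeros (q : ℕ) (hq : 2 ≤ q) (f : ℕ → ℂ)
    (hf : CompletelyMultiplicative f) (hker : (qKernel q f).Finite)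
    (hinf : {p : ℕ | p.Prime ∧ f p = 0}.Infinite) :
    ∃ N : ℕ, ∀ p : ℕ, p.Prime → N ≤ p → f p = 0 := by
  have hq0 : 0 < q := by omega
  by_contra hcon
  push_neg at hcon
  -- hcon : ∀ N, ∃ p, p.Prime ∧ N ≤ p ∧ f p ≠ 0
  by_cases hgp : ∃ c u L M₁ M₂ v₀ : ℕ, M₁ < M₂ ∧ M₂ < q ^ L ∧
      (∀ x, f (q ^ (c + L) * x + (q ^ c * M₁ + u)) = f (q ^ c * x + u)) ∧
      (∀ x, f (q ^ (c + L) * x + (q ^ c * M₂ + u)) = f (q ^ c * x + u)) ∧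
      f (q ^ c * v₀ + u) ≠ 0
  · obtain ⟨c, u, L, M₁, M₂, v₀, h1, h2, h3, h4, h5⟩ := hgp
    exact goodpair_contradiction q hq f hf hinf c u L M₁ M₂ v₀ h1 h2 h3 h4 h5
  · -- no good pair: counting contradiction
    set V : Finset (ℕ → ℂ) := (insert f hker.toFinset).filter (fun g => g ≠ 0) with hV
    set D : ℕ := V.card with hD
    -- representation of states
    have hrep : ∀ s ∈ V, ∃ c u : ℕ, s = fun x => f (q ^ c * x + u) := by
      intro s hs
      have hs' : s ∈ insert f hker.toFinset := (Finset.mem_filter.mp hs).1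
      rcases Finset.mem_insert.mp hs' with hsf | hsk
      · exact ⟨0, 0, by funext x; rw [hsf]; simp⟩
      · obtain ⟨i, _, r, _, hsr⟩ := (Set.Finite.mem_toFinset hker).mp hsk
        exact ⟨i, r, hsr⟩
    -- the unique-loop property
    have UL : ∀ s ∈ V, ∀ L M₁ M₂ : ℕ, M₁ < q ^ L → M₂ < q ^ L →
        (∀ x, s (q ^ L * x + M₁) = s x) → (∀ x, s (q ^ L * x + M₂) = s x) → M₁ = M₂ := by
      intro s hs L M₁ M₂ hlt1 hlt2 lo1 lo2
      by_contra hne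
      obtain ⟨c, u, hsrep⟩ := hrep s hs
      have hsne : s ≠ 0 := (Finset.mem_filter.mp hs).2
      obtain ⟨v₀, hv⟩ := Function.ne_iff.mp hsne
      have hv' : f (q ^ c * v₀ + u) ≠ 0 := by
        rw [hsrep] at hv
        simpa using hv
      have lof : ∀ M : ℕ, (∀ x, s (q ^ L * x + M) = s x) →
          (∀ x, f (q ^ (c + L) * x + (q ^ c * M + u)) = f (q ^ c * x + u)) := by
        intro M hM x
        have h6 := hM x
        rw [hsrep] at h6
        simp only at h6
        have earg : q ^ c * (q ^ L * x + M) + u = q ^ (c + L) * x + (q ^ c * M + u) := by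
          rw [pow_add]; ring
        rwa [earg] at h6
      rcases Nat.lt_or_ge M₁ M₂ with hlt | hge
      · exact hgp ⟨c, u, L, M₁, M₂, v₀, hlt, hlt2, lof M₁ lo1, lof M₂ lo2, hv'⟩
      · have hlt : M₂ < M₁ := by omega
        exact hgp ⟨c, u, L, M₂, M₁, v₀, hlt, hlt1, lof M₂ lo2, lof M₁ lo1, hv'⟩
    -- upper bound for the counting function
    have hupper : ∀ ℓ : ℕ,
        ((Finset.range (q ^ ℓ)).filter (fun n => f n ≠ 0)).card ≤ (2 * q * (ℓ + 1)) ^ D := by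
      intro ℓ
      have hsub : ((Finset.range (q ^ ℓ)).filter (fun n => f n ≠ 0))
          ⊆ ((Finset.range (q ^ ℓ)).filter (fun n => ∀ j ≤ ℓ, st q f j (n % q ^ j) ∈ V)) := by
        intro n hn
        obtain ⟨hnR, hnf⟩ := Finset.mem_filter.mp hn
        apply Finset.mem_filter.mpr
        refine ⟨hnR, ?_⟩
        intro j hj
        have hlive : st q f j (n % q ^ j) ≠ 0 := by
          intro h0
          apply hnf
          have h7 := congrFun h0 (n / q ^ j)
          simp only [st, Pi.zero_apply] at h7
          rwa [Nat.div_add_mod n (q ^ j)] at h7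
        apply Finset.mem_filter.mpr
        refine ⟨?_, hlive⟩
        apply Finset.mem_insert.mpr
        rcases Nat.eq_zero_or_pos j with hj0 | hjpos
        · left
          rw [hj0, pow_zero, Nat.mod_one]
          exact st_zero q f
        · right
          apply (Set.Finite.mem_toFinset hker).mpr
          exact ⟨j, hjpos, n % q ^ j, Nat.mod_lt _ (pow_pos hq0 j), rfl⟩
      calc ((Finset.range (q ^ ℓ)).filter (fun n => f n ≠ 0)).card
          ≤ ((Finset.range (q ^ ℓ)).filter (fun n => ∀ j ≤ ℓ, st q f j (n % q ^ j) ∈ V)).card :=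
            Finset.card_le_card hsub
      _ ≤ (2 * q * (ℓ + 1)) ^ D := count_bound q hq D V rfl UL ℓ f
    -- construct D+2 distinct primes with f p ≠ 0
    set seq : ℕ → ℕ := fun n => Nat.rec (hcon 0).choose (fun _ prev => (hcon (prev + 1)).choose) n
      with hseqdef
    have hseq0 : seq 0 = (hcon 0).choose := rfl
    have hseqs : ∀ n, seq (n + 1) = (hcon (seq n + 1)).choose := fun n => rfl
    have hseqP : ∀ n, (seq n).Prime ∧ f (seq n) ≠ 0 := by
      intro n
      cases n with
      | zero =>
        rw [hseq0]
        exact ⟨(hcon 0).choose_spec.1, (hcon 0).choose_spec.2.2⟩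
      | succ n =>
        rw [hseqs n]
        exact ⟨(hcon (seq n + 1)).choose_spec.1, (hcon (seq n + 1)).choose_spec.2.2⟩
    have hseqmono : StrictMono seq := by
      apply strictMono_nat_of_lt_succ
      intro n
      have := (hcon (seq n + 1)).choose_spec.2.1
      rw [hseqs n]
      omega
    set P : Fin (D + 2) → ℕ := fun i => seq i.val with hP
    have hPinj : Function.Injective P := by
      intro i j hij
      exact Fin.ext (hseqmono.injective hij)
    have hPprime : ∀ i, (P i).Prime := fun i => (hseqP i.val).1
    have hPne : ∀ i, f (P i) ≠ 0 := fun i => (hseqP i.val).2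
    -- bound the primes
    set B : ℕ := Finset.univ.sup P with hB
    have hPB : ∀ i, P i ≤ q ^ B := by
      intro i
      have h8 : P i ≤ B := Finset.le_sup (Finset.mem_univ i)
      have h9 : B < q ^ B := Nat.lt_pow_self (by omega)
      omega
    have hB2 : 2 ≤ B := by
      have h8 : P 0 ≤ B := Finset.le_sup (Finset.mem_univ 0)
      have := (hPprime 0).two_le
      omega
    set A : ℕ := 8 * q * B * (D + 2) with hA
    set E : ℕ := A ^ (D + 2) with hE
    have hA2 : 2 ≤ A := by
      rw [hA]
      calc 2 ≤ 8 * q := by omega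
      _ ≤ 8 * q * B := Nat.le_mul_of_pos_right _ (by omega)
      _ ≤ 8 * q * B * (D + 2) := Nat.le_mul_of_pos_right _ (by omega)
    have hE1 : 1 ≤ E := Nat.one_le_pow _ _ (by omega)
    set ℓ : ℕ := B * (D + 2) * E + 1 with hℓ
    -- the injection from exponent vectors
    set F : (Fin (D + 2) → Fin (E + 1)) → ℕ := fun e => ∏ i, P i ^ (e i : ℕ) with hF
    have hFmem : ∀ e : Fin (D + 2) → Fin (E + 1),
        F e ∈ (Finset.range (q ^ ℓ)).filter (fun n => f n ≠ 0) := by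
      intro e
      apply Finset.mem_filter.mpr
      constructor
      · apply Finset.mem_range.mpr
        have hsum : (∑ i, ((e i : ℕ))) ≤ (D + 2) * E := by
          calc (∑ i : Fin (D + 2), ((e i : ℕ))) ≤ ∑ i : Fin (D + 2), E := by
                apply Finset.sum_le_sum
                intro i _
                have := (e i).is_lt
                omega
          _ = (D + 2) * E := by
                rw [Finset.sum_const, Finset.card_univ, Fintype.card_fin, smul_eq_mul]
        calc F e ≤ ∏ i, (q ^ B) ^ (e i : ℕ) := by
              apply Finset.prod_le_prod'
              intro i _
              exact Nat.pow_le_pow_left (hPB i) _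
        _ = (q ^ B) ^ (∑ i, ((e i : ℕ))) := Finset.prod_pow_eq_pow_sum _ _ _
        _ = q ^ (B * ∑ i, ((e i : ℕ))) := by rw [← pow_mul]
        _ ≤ q ^ (B * ((D + 2) * E)) := Nat.pow_le_pow_right hq0 (Nat.mul_le_mul_left B hsum)
        _ < q ^ ℓ := by
              apply Nat.pow_lt_pow_right (by omega)
              rw [hℓ]
              have : B * ((D + 2) * E) = B * (D + 2) * E := by ring
              omega
      · rw [hF]
        simp only
        rw [fprod f hf]
        apply Finset.prod_ne_zero_iff.mpr
        intro i _
        rw [fpow f hf]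
        exact pow_ne_zero _ (hPne i)
    have hFinj : Function.Injective F := by
      intro e e' hee
      have hfact : ∀ (e : Fin (D + 2) → Fin (E + 1)) (j : Fin (D + 2)),
          (F e).factorization (P j) = (e j : ℕ) := by
        intro e j
        rw [hF]
        simp only
        rw [Nat.factorization_prod (by
          intro i _
          exact pow_ne_zero _ (hPprime i).pos.ne')]
        rw [Finsupp.finset_sum_apply]
        have hterm : ∀ i ∈ Finset.univ, ((P i ^ (e i : ℕ)).factorization) (P j)
            = if i = j then (e i : ℕ) else 0 := by
          intro i _
          rw [(hPprime i).factorization_pow, Finsupp.single_apply]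
          congr 1
          simp only [eq_iff_iff]
          constructor
          · intro h; exact hPinj h
          · intro h; rw [h]
        rw [Finset.sum_congr rfl hterm, Finset.sum_ite_eq' Finset.univ j]
        simp
      funext j
      apply Fin.ext
      have h1 := hfact e j
      have h2 := hfact e' j
      rw [hee] at h1
      exact h1.symm.trans h2
    -- lower bound
    have hlower : (E + 1) ^ (D + 2) ≤ ((Finset.range (q ^ ℓ)).filter (fun n => f n ≠ 0)).card := by
      have h10 : (Finset.univ : Finset (Fin (D + 2) → Fin (E + 1))).card
          ≤ ((Finset.range (q ^ ℓ)).filter (fun n => f n ≠ 0)).card := by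
        apply Finset.card_le_card_of_injOn F (fun e _ => hFmem e)
        intro e _ e' _ h
        exact hFinj h
      calc (E + 1) ^ (D + 2) = Fintype.card (Fin (D + 2) → Fin (E + 1)) := by
            rw [Fintype.card_fun, Fintype.card_fin, Fintype.card_fin]
      _ = (Finset.univ : Finset (Fin (D + 2) → Fin (E + 1))).card := Finset.card_univ.symm
      _ ≤ _ := h10
    -- arithmetic contradiction
    have hchain : (E + 1) ^ (D + 2) ≤ (2 * q * (ℓ + 1)) ^ D := le_trans hlower (hupper ℓ)
    have hG4 : 4 ≤ B * (D + 2) * E := by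
      have h20 : 2 * 2 * 1 ≤ B * (D + 2) * E :=
        Nat.mul_le_mul (Nat.mul_le_mul hB2 (by omega)) hE1
      omega
    have hAE : A * E = 8 * q * (B * (D + 2) * E) := by rw [hA]; ring
    have h11 : 2 * q * (ℓ + 1) ≤ A * E := by
      rw [hAE]
      calc 2 * q * (ℓ + 1) ≤ 2 * q * (2 * (B * (D + 2) * E)) := by
            apply Nat.mul_le_mul_left
            rw [hℓ]
            omega
      _ ≤ 8 * q * (B * (D + 2) * E) := by
            have h21 : 2 * q * (2 * (B * (D + 2) * E)) = 4 * q * (B * (D + 2) * E) := by ring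
            rw [h21]
            apply Nat.mul_le_mul_right
            omega
    have h12 : (2 * q * (ℓ + 1)) ^ D ≤ (A * E) ^ D := Nat.pow_le_pow_left h11 D
    have h13 : A ^ D < E ^ 2 := by
      rw [hE, ← pow_mul]
      apply Nat.pow_lt_pow_right (by omega)
      omega
    have h14 : (A * E) ^ D < (E + 1) ^ (D + 2) := by
      calc (A * E) ^ D = A ^ D * E ^ D := mul_pow A E D
      _ < E ^ 2 * E ^ D := by
          apply Nat.mul_lt_mul_of_lt_of_le h13 (le_refl _)
          exact pow_pos (by omega) D
      _ = E ^ (2 + D) := (pow_add E 2 D).symm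
      _ ≤ (E + 1) ^ (2 + D) := Nat.pow_le_pow_left (by omega) _
      _ = (E + 1) ^ (D + 2) := by rw [Nat.add_comm 2 D]
    have := lt_of_le_of_lt (le_trans hchain h12) h14
    exact lt_irrefl _ this
end
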